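/- For every c ≥ 2 and every D, there exists a claw-free graph H with Δ(H) ≥ D and χ(H) > max{ω(H), Δ(H) − c}. In particular, for t ≥ 3, the join H_t of K_t with a 5-cycle satisfies χ(H_t) = t + 3, ω(H_t) = t + 2, and Δ(H_t) = t + 4. -/

import Mathlib

open SimpleGraph

/-- The maximum degree of a finite graph (using classical decidability). -/
noncomputable def maxDeg {V : Type*} [Fintype V] (G : SimpleGraph V) : ℕ :=
  @SimpleGraph.maxDegree V G _ (Classical.decRel _)

/-- A graph is claw-free if it has no induced `K_{1,3}`: there is no vertex `v` with
three pairwise distinct, pairwise nonadjacent neighbors. -/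
def ClawFree {V : Type*} (G : SimpleGraph V) : Prop :=
  ¬ ∃ v a b c : V, a ≠ b ∧ a ≠ c ∧ b ≠ c ∧
    G.Adj v a ∧ G.Adj v b ∧ G.Adj v c ∧ ¬ G.Adj a b ∧ ¬ G.Adj a c ∧ ¬ G.Adj b c

/-- The join `H_t` of the complete graph `K_t` with a `5`-cycle: every vertex of
`K_t` is adjacent to every vertex of `C_5`. -/
def joinKC5 (t : ℕ) : SimpleGraph (Fin t ⊕ Fin 5) where
  Adj x y :=
    match x, y with
    | Sum.inl a, Sum.inl b => a ≠ b
    | Sum.inl _, Sum.inr _ => True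
    | Sum.inr _, Sum.inl _ => True
    | Sum.inr a, Sum.inr b => (cycleGraph 5).Adj a b
  symm := by
    constructor
    rintro (a | a) (b | b) h
    · exact Ne.symm h
    · trivial
    · trivial
    · exact (cycleGraph 5).adj_symm h
  loopless := by
    constructor
    rintro (a | a) h
    · exact h rfl
    · exact (cycleGraph 5).irrefl h

/-! ### Auxiliary transfer lemmas along an equivalence of vertex types -/

section Transfer

variable {V W : Type*} [Fintype V] [Fintype W]

lemma comap_degree (e : V ≃ W) (G : SimpleGraph W) [DecidableRel G.Adj]
    [DecidableRel (G.comap ⇑e).Adj] (v : V) :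
    (G.comap ⇑e).degree v = G.degree (e v) := by
  have h : (G.comap ⇑e).neighborFinset v = (G.neighborFinset (e v)).map e.symm.toEmbedding := by
    ext x
    simp only [mem_neighborFinset, comap_adj, Finset.mem_map, Equiv.coe_toEmbedding]
    constructor
    · intro h; exact ⟨e x, h, by simp⟩
    · rintro ⟨y, h, rfl⟩; simpa using h
  rw [SimpleGraph.degree, h, Finset.card_map, SimpleGraph.degree]

lemma comap_maxDegree (e : V ≃ W) (G : SimpleGraph W) [DecidableRel G.Adj]
    [DecidableRel (G.comap ⇑e).Adj] :
    (G.comap ⇑e).maxDegree = G.maxDegree := by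
  apply le_antisymm
  · apply maxDegree_le_of_forall_degree_le
    intro v; rw [comap_degree]; exact degree_le_maxDegree _ _
  · apply maxDegree_le_of_forall_degree_le
    intro w
    have := comap_degree e G (e.symm w)
    rw [e.apply_symm_apply] at this
    rw [← this]; exact degree_le_maxDegree _ _

omit [Fintype V] [Fintype W] in
lemma comap_isClique (e : V ≃ W) (G : SimpleGraph W) {s : Finset V}
    (h : (G.comap ⇑e).IsClique ↑s) : G.IsClique ↑(s.map e.toEmbedding) := by
  intro x hx y hy hne
  simp only [Finset.coe_map, Set.mem_image, Finset.mem_coe, Equiv.coe_toEmbedding] at hx hy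
  obtain ⟨a, ha, rfl⟩ := hx
  obtain ⟨b, hb, rfl⟩ := hy
  exact h ha hb (fun hab => hne (by rw [hab]))

lemma comap_cliqueNum_le (e : V ≃ W) (G : SimpleGraph W) :
    (G.comap ⇑e).cliqueNum ≤ G.cliqueNum := by
  obtain ⟨s, hs⟩ := (G.comap ⇑e).exists_isNClique_cliqueNum
  have h := comap_isClique e G hs.isClique
  calc (G.comap ⇑e).cliqueNum = (s.map e.toEmbedding).card := by
        rw [Finset.card_map, hs.card_eq]
    _ ≤ G.cliqueNum := IsClique.card_le_cliqueNum (tc := h)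

omit [Fintype V] [Fintype W] in
lemma equiv_comap_comap (e : V ≃ W) (G : SimpleGraph W) :
    (G.comap ⇑e).comap ⇑e.symm = G := by
  ext x y; simp

lemma comap_cliqueNum (e : V ≃ W) (G : SimpleGraph W) :
    (G.comap ⇑e).cliqueNum = G.cliqueNum := by
  refine le_antisymm (comap_cliqueNum_le e G) ?_
  have := comap_cliqueNum_le e.symm (G.comap ⇑e)
  rwa [equiv_comap_comap] at this

omit [Fintype V] [Fintype W] in
lemma comap_chromaticNumber (e : V ≃ W) (G : SimpleGraph W) :
    (G.comap ⇑e).chromaticNumber = G.chromaticNumber := by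
  refine le_antisymm
    (chromaticNumber_mono_of_hom (SimpleGraph.Embedding.comap e.toEmbedding G).toHom) ?_
  have := chromaticNumber_mono_of_hom
    (SimpleGraph.Embedding.comap e.symm.toEmbedding (G.comap ⇑e)).toHom
  rwa [show (G.comap ⇑e).comap ⇑e.symm.toEmbedding = G from equiv_comap_comap e G] at this

end Transfer

/-! ### Basic adjacency lemmas for `joinKC5` -/

@[simp] lemma joinKC5_adj_ll {t : ℕ} {a b : Fin t} :
    (joinKC5 t).Adj (Sum.inl a) (Sum.inl b) ↔ a ≠ b := Iff.rfl
@[simp] lemma joinKC5_adj_lr {t : ℕ} {a : Fin t} {b : Fin 5} :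
    (joinKC5 t).Adj (Sum.inl a) (Sum.inr b) := trivial
@[simp] lemma joinKC5_adj_rl {t : ℕ} {a : Fin t} {b : Fin 5} :
    (joinKC5 t).Adj (Sum.inr b) (Sum.inl a) := trivial
@[simp] lemma joinKC5_adj_rr {t : ℕ} {a b : Fin 5} :
    (joinKC5 t).Adj (Sum.inr a) (Sum.inr b) ↔ (cycleGraph 5).Adj a b := Iff.rfl

/-! ### Maximum degree -/

lemma joinKC5_maxDegree (t : ℕ) (ht : 1 ≤ t) [DecidableRel (joinKC5 t).Adj] :
    (joinKC5 t).maxDegree = t + 4 := by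
  have hcard : Fintype.card (Fin t ⊕ Fin 5) = t + 5 := by simp
  have hdeg : (joinKC5 t).degree (Sum.inl ⟨0, ht⟩) = t + 4 := by
    have h : (joinKC5 t).neighborFinset (Sum.inl ⟨0, ht⟩) =
        Finset.univ.erase (Sum.inl ⟨0, ht⟩) := by
      ext x
      simp only [mem_neighborFinset, Finset.mem_erase, Finset.mem_univ, and_true]
      cases x with
      | inl b =>
        simp only [joinKC5_adj_ll]
        constructor
        · intro h hb; exact h (by injection hb.symm)
        · intro h hb; exact h (by rw [hb])
      | inr b => simp
    rw [SimpleGraph.degree, h, Finset.card_erase_of_mem (Finset.mem_univ _),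
      Finset.card_univ, hcard]
    omega
  apply le_antisymm
  · apply maxDegree_le_of_forall_degree_le
    intro v
    have := (joinKC5 t).degree_lt_card_verts v
    omega
  · rw [← hdeg]; exact degree_le_maxDegree _ _

/-! ### Clique number -/

lemma c5_clique_card (s : Finset (Fin 5)) (h : (cycleGraph 5).IsClique ↑s) : s.card ≤ 2 := by
  revert h; revert s; decide

lemma joinKC5_cliqueNum (t : ℕ) : (joinKC5 t).cliqueNum = t + 2 := by
  apply le_antisymm
  · obtain ⟨s, hs⟩ := (joinKC5 t).exists_isNClique_cliqueNum
    rw [← hs.card_eq, ← Finset.card_toLeft_add_card_toRight (u := s)]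
    have h1 : s.toLeft.card ≤ t := by
      simpa using Finset.card_le_univ s.toLeft
    have h2 : s.toRight.card ≤ 2 := by
      apply c5_clique_card
      intro a ha b hb hab
      rw [Finset.mem_coe, Finset.mem_toRight] at ha hb
      have := hs.isClique ha hb (fun h => hab (by injection h))
      simpa using this
    omega
  · set s : Finset (Fin t ⊕ Fin 5) :=
      (Finset.univ.map ⟨Sum.inl, Sum.inl_injective⟩) ∪ {Sum.inr 0, Sum.inr 1} with hsdef
    have hclique : (joinKC5 t).IsClique ↑s := by
      intro x hx y hy hxy
      simp only [hsdef, Finset.coe_union, Set.mem_union, Finset.coe_map,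
        Function.Embedding.coeFn_mk, Set.mem_image, Finset.mem_coe, Finset.mem_univ,
        Finset.coe_insert, Set.mem_insert_iff, Finset.coe_singleton,
        Set.mem_singleton_iff, true_and] at hx hy
      rcases hx with ⟨a, _, rfl⟩ | hx <;> rcases hy with ⟨b, _, rfl⟩ | hy
      · exact fun h => hxy (by rw [h])
      · rcases hy with rfl | rfl <;> simp
      · rcases hx with rfl | rfl <;> simp
      · rcases hx with rfl | rfl <;> rcases hy with rfl | rfl
        · exact absurd rfl hxy
        · simp; decide
        · simp; decide
        · exact absurd rfl hxy
    have hcard : s.card = t + 2 := by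
      rw [hsdef, Finset.card_union_of_disjoint, Finset.card_map, Finset.card_univ]
      · simp
      · simp
    calc t + 2 = s.card := hcard.symm
      _ ≤ (joinKC5 t).cliqueNum := IsClique.card_le_cliqueNum (tc := hclique)

/-! ### Chromatic number -/

lemma c5_not_colorable_two : ¬ (cycleGraph 5).Colorable 2 := by
  rintro ⟨C⟩
  have : ¬ ∃ f : Fin 5 → Fin 2, ∀ i j : Fin 5, (cycleGraph 5).Adj i j → f i ≠ f j := by decide
  exact this ⟨C, fun i j h => C.valid h⟩

lemma joinKC5_colorable (t : ℕ) : (joinKC5 t).Colorable (t + 3) := by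
  refine ⟨Coloring.mk (fun x => match x with
    | Sum.inl a => a.castLE (by omega)
    | Sum.inr b => ⟨t + (![0,1,0,1,2] : Fin 5 → Fin 3) b, by omega⟩) ?_⟩
  have hg : ∀ a b : Fin 5, (cycleGraph 5).Adj a b →
      (![0,1,0,1,2] : Fin 5 → Fin 3) a ≠ ![0,1,0,1,2] b := by decide
  rintro (a | a) (b | b) hab
  · simp only [ne_eq, Fin.ext_iff, Fin.coe_castLE]
    exact fun h => hab (Fin.ext h)
  · simp only [ne_eq, Fin.ext_iff, Fin.coe_castLE]
    have : (a : ℕ) < t := a.isLt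
    omega
  · simp only [ne_eq, Fin.ext_iff, Fin.coe_castLE]
    have : (b : ℕ) < t := b.isLt
    omega
  · have := hg a b hab
    simp only [ne_eq, Fin.ext_iff]
    intro h
    exact this (Fin.ext (by omega))

lemma joinKC5_not_colorable (t : ℕ) : ¬ (joinKC5 t).Colorable (t + 2) := by
  rintro ⟨C⟩
  set S : Finset (Fin (t + 2)) := Finset.univ.image (fun a : Fin t => C (Sum.inl a)) with hS
  have hinj : Function.Injective (fun a : Fin t => C (Sum.inl a)) := by
    intro a b h
    by_contra hab
    exact C.valid (joinKC5_adj_ll.mpr hab) h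
  have hScard : S.card = t := by
    rw [hS, Finset.card_image_of_injective _ hinj, Finset.card_univ, Fintype.card_fin]
  have hSc : Sᶜ.card = 2 := by
    rw [Finset.card_compl, hScard, Fintype.card_fin]
    omega
  have hmem : ∀ b : Fin 5, C (Sum.inr b) ∈ Sᶜ := by
    intro b
    rw [Finset.mem_compl]
    intro hmem
    rw [hS] at hmem
    obtain ⟨a, _, ha⟩ := Finset.mem_image.mp hmem
    exact C.valid (joinKC5_adj_lr (a := a) (b := b)) ha
  have : (cycleGraph 5).Colorable (Sᶜ.card) := by
    have C5 : (cycleGraph 5).Coloring ↥(Sᶜ : Finset (Fin (t+2))) :=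
      Coloring.mk (fun b => ⟨C (Sum.inr b), hmem b⟩)
        (fun {a b} hab h => C.valid (joinKC5_adj_rr.mpr hab) (by simpa using h))
    have := C5.colorable
    rwa [Fintype.card_coe] at this
  rw [hSc] at this
  exact c5_not_colorable_two this

lemma joinKC5_chromaticNumber (t : ℕ) :
    (joinKC5 t).chromaticNumber = ((t + 3 : ℕ) : ℕ∞) := by
  apply le_antisymm
  · exact (joinKC5_colorable t).chromaticNumber_le
  · by_contra h
    push_neg at h
    have h2 : (joinKC5 t).chromaticNumber ≤ ((t + 2 : ℕ) : ℕ∞) := by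
      have := Order.le_of_lt_add_one (by
        rwa [show ((t + 2 : ℕ) : ℕ∞) + 1 = ((t + 3 : ℕ) : ℕ∞) by push_cast; ring])
      exact this
    exact joinKC5_not_colorable t (chromaticNumber_le_iff_colorable.mp h2)

/-! ### Claw-freeness -/

lemma joinKC5_clawFree (t : ℕ) : ClawFree (joinKC5 t) := by
  rintro ⟨v, a, b, c, hab, hac, hbc, -, -, -, nab, nac, nbc⟩
  have key : ∀ x y : Fin t ⊕ Fin 5, x ≠ y → ¬ (joinKC5 t).Adj x y →
      ∃ x' : Fin 5, x = Sum.inr x' := by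
    rintro (x | x) (y | y) hne hadj
    · exact absurd (fun h => hne (by rw [h])) hadj
    · exact absurd joinKC5_adj_lr hadj
    · exact ⟨x, rfl⟩
    · exact ⟨x, rfl⟩
  obtain ⟨a', rfl⟩ := key a b hab nab
  obtain ⟨b', rfl⟩ := key b (Sum.inr a') (Ne.symm hab) (fun h => nab h.symm)
  obtain ⟨c', rfl⟩ := key c (Sum.inr a') (Ne.symm hac) (fun h => nac h.symm)
  have : ¬ ∃ a b c : Fin 5, a ≠ b ∧ a ≠ c ∧ b ≠ c ∧ ¬(cycleGraph 5).Adj a b ∧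
      ¬(cycleGraph 5).Adj a c ∧ ¬(cycleGraph 5).Adj b c := by decide
  refine this ⟨a', b', c', ?_, ?_, ?_, ?_, ?_, ?_⟩
  · exact fun h => hab (by rw [h])
  · exact fun h => hac (by rw [h])
  · exact fun h => hbc (by rw [h])
  · exact fun h => nab (joinKC5_adj_rr.mpr h)
  · exact fun h => nac (joinKC5_adj_rr.mpr h)
  · exact fun h => nbc (joinKC5_adj_rr.mpr h)

lemma joinKC5_maxDeg (t : ℕ) (ht : 1 ≤ t) : maxDeg (joinKC5 t) = t + 4 :=
  @joinKC5_maxDegree t ht (Classical.decRel _)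

/-- For every `c ≥ 2` and `D` there is a claw-free graph `H` with `Δ(H) ≥ D` and
`χ(H) > max{ω(H), Δ(H) − c}`.  In particular, for `t ≥ 3` the join `H_t` of `K_t`
with a `5`-cycle satisfies `χ(H_t) = t + 3`, `ω(H_t) = t + 2` and `Δ(H_t) = t + 4`. -/
theorem claw_free_counterexamples :
    (∀ c : ℕ, 2 ≤ c → ∀ D : ℕ, ∃ (n : ℕ) (H : SimpleGraph (Fin n)),
      ClawFree H ∧ D ≤ maxDeg H ∧
        ((max H.cliqueNum (maxDeg H - c) : ℕ) : ℕ∞) < H.chromaticNumber) ∧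
    (∀ t : ℕ, 3 ≤ t →
      (joinKC5 t).chromaticNumber = ((t + 3 : ℕ) : ℕ∞) ∧
      (joinKC5 t).cliqueNum = t + 2 ∧
      maxDeg (joinKC5 t) = t + 4) := by
  constructor
  · intro c hc D
    set t := max 3 D with ht
    have ht3 : 3 ≤ t := le_max_left _ _
    have htD : D ≤ t := le_max_right _ _
    set e : Fin (t + 5) ≃ (Fin t ⊕ Fin 5) := finSumFinEquiv.symm with he
    refine ⟨t + 5, (joinKC5 t).comap ⇑e, ?_, ?_, ?_⟩
    · rintro ⟨v, a, b, c', hab, hac, hbc, h1, h2, h3, n1, n2, n3⟩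
      exact joinKC5_clawFree t ⟨e v, e a, e b, e c',
        fun h => hab (e.injective h), fun h => hac (e.injective h),
        fun h => hbc (e.injective h), h1, h2, h3, n1, n2, n3⟩
    · have h1 : maxDeg ((joinKC5 t).comap ⇑e) = maxDeg (joinKC5 t) :=
        @comap_maxDegree _ _ _ _ e (joinKC5 t) (Classical.decRel _) (Classical.decRel _)
      rw [h1, joinKC5_maxDeg t (by omega)]
      omega
    · have h1 : maxDeg ((joinKC5 t).comap ⇑e) = maxDeg (joinKC5 t) :=
        @comap_maxDegree _ _ _ _ e (joinKC5 t) (Classical.decRel _) (Classical.decRel _)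
      rw [h1, joinKC5_maxDeg t (by omega), comap_cliqueNum, joinKC5_cliqueNum,
        comap_chromaticNumber, joinKC5_chromaticNumber]
      rw [Nat.cast_lt]
      have : max (t + 2) (t + 4 - c) = t + 2 := by omega
      omega
  · intro t ht
    exact ⟨joinKC5_chromaticNumber t, joinKC5_cliqueNum t, joinKC5_maxDeg t (by omega)⟩
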